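/- arXiv:1403.4094 — 3 statements merged into one kernel-verified Lean document; each statement's English description precedes it below -/
import Mathlib

section
/- Let C be a monoidal category equipped with a symmetry γ (a natural family of isomorphisms γ_{A,B} : A ⊗ B ⟶ B ⊗ A satisfying the hexagon coherence conditions and γ_{B,A} ∘ γ_{A,B} = id_{A⊗B}) and, for every object A, with morphisms δ_A : A ⟶ A ⊗ A and ε_A : A ⟶ 𝟙 making (A, δ_A, ε_A) a cocommutative comonoid (coassociativity: δ_A ≫ (δ_A ⊗ id_A) ≫ α_{A,A,A} = δ_A ≫ (id_A ⊗ δ_A); counitality: δ_A ≫ (ε_A ⊗ id_A) ≫ λ_A = id_A = δ_A ≫ (id_A ⊗ ε_A) ≫ ρ_A; cocommutativity: δ_A ≫ γ_{A,A} = δ_A) which is natural in A (for every morphism f : A ⟶ B one has f ≫ δ_B = δ_A ≫ (f ⊗ f) and f ≫ ε_B = ε_A). Then the unit object 𝟙 is a terminal object of C: for every object A, ε_A is the unique morphism A ⟶ 𝟙. -/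
open CategoryTheory CategoryTheory.MonoidalCategory

/-- If a monoidal category is equipped with a symmetry `γ` and every object `A` carries a
cocommutative comonoid structure `(δ_A, ε_A)` which is natural in `A`, then the unit
object `𝟙_ C` is terminal: `ε_A` is the unique morphism `A ⟶ 𝟙_ C`. -/
theorem unit_terminal_of_natural_comonoid {C : Type*} [Category C] [MonoidalCategory C]
    -- the symmetry
    (γ : ∀ A B : C, A ⊗ B ≅ B ⊗ A)
    (γ_natural : ∀ {A A' B B' : C} (f : A ⟶ A') (g : B ⟶ B'),
      (f ⊗ₘ g) ≫ (γ A' B').hom = (γ A B).hom ≫ (g ⊗ₘ f))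
    (hexagon_forward : ∀ A B D : C,
      (α_ A B D).hom ≫ (γ A (B ⊗ D)).hom ≫ (α_ B D A).hom =
        ((γ A B).hom ▷ D) ≫ (α_ B A D).hom ≫ (B ◁ (γ A D).hom))
    (hexagon_reverse : ∀ A B D : C,
      (α_ A B D).inv ≫ (γ (A ⊗ B) D).hom ≫ (α_ D A B).inv =
        (A ◁ (γ B D).hom) ≫ (α_ A D B).inv ≫ ((γ A D).hom ▷ B))
    (symmetry : ∀ A B : C, (γ A B).hom ≫ (γ B A).hom = 𝟙 (A ⊗ B))
    -- the natural cocommutative comonoid structure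
    (δ : ∀ A : C, A ⟶ A ⊗ A) (ε : ∀ A : C, A ⟶ 𝟙_ C)
    (coassoc : ∀ A : C, δ A ≫ (δ A ⊗ₘ 𝟙 A) ≫ (α_ A A A).hom = δ A ≫ (𝟙 A ⊗ₘ δ A))
    (counit_left : ∀ A : C, δ A ≫ (ε A ⊗ₘ 𝟙 A) ≫ (λ_ A).hom = 𝟙 A)
    (counit_right : ∀ A : C, δ A ≫ (𝟙 A ⊗ₘ ε A) ≫ (ρ_ A).hom = 𝟙 A)
    (cocomm : ∀ A : C, δ A ≫ (γ A A).hom = δ A)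
    (δ_natural : ∀ {A B : C} (f : A ⟶ B), f ≫ δ B = δ A ≫ (f ⊗ₘ f))
    (ε_natural : ∀ {A B : C} (f : A ⟶ B), f ≫ ε B = ε A) :
    ∀ (A : C) (f : A ⟶ 𝟙_ C), f = ε A := by
  have hunit : ε (𝟙_ C) = 𝟙 (𝟙_ C) := by
    -- section for ε (𝟙_ C)
    have hsec : (δ (𝟙_ C) ≫ (ρ_ (𝟙_ C)).hom) ≫ ε (𝟙_ C) = 𝟙 (𝟙_ C) := by
      have h := counit_left (𝟙_ C)
      have hnat : (ε (𝟙_ C) ⊗ₘ 𝟙 (𝟙_ C)) ≫ (λ_ (𝟙_ C)).hom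
          = (ρ_ (𝟙_ C)).hom ≫ ε (𝟙_ C) := by
        rw [MonoidalCategory.unitors_equal]
        simp
      rw [hnat] at h
      simpa [Category.assoc] using h
    have hidem : ε (𝟙_ C) ≫ ε (𝟙_ C) = ε (𝟙_ C) := ε_natural _
    calc ε (𝟙_ C) = 𝟙 (𝟙_ C) ≫ ε (𝟙_ C) := by rw [Category.id_comp]
      _ = ((δ (𝟙_ C) ≫ (ρ_ (𝟙_ C)).hom) ≫ ε (𝟙_ C)) ≫ ε (𝟙_ C) := by rw [hsec]
      _ = (δ (𝟙_ C) ≫ (ρ_ (𝟙_ C)).hom) ≫ (ε (𝟙_ C) ≫ ε (𝟙_ C)) := by simp [Category.assoc]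
      _ = 𝟙 (𝟙_ C) := by rw [hidem, hsec]
  intro A f
  calc f = f ≫ 𝟙 (𝟙_ C) := by rw [Category.comp_id]
    _ = f ≫ ε (𝟙_ C) := by rw [hunit]
    _ = ε A := ε_natural f
end

section
/- For every n ≥ 1, the group presented by generators σ₁, …, σ_{n-1} subject to the relations σᵢσᵢ₊₁σᵢ = σᵢ₊₁σᵢσᵢ₊₁ (for 1 ≤ i ≤ n−2), σᵢ² = 1 (for 1 ≤ i ≤ n−1), and σᵢσⱼ = σⱼσᵢ (for all i, j with |i − j| ≥ 2) is isomorphic to the symmetric group on n elements. Concretely, with rels ⊆ FreeGroup (Fin (n-1)) the set of words σᵢσᵢ₊₁σᵢσᵢ₊₁⁻¹σᵢ⁻¹σᵢ₊₁⁻¹, σᵢ², and σᵢσⱼσᵢ⁻¹σⱼ⁻¹ for |i − j| ≥ 2, the presented group PresentedGroup rels is isomorphic (as a group) to Equiv.Perm (Fin n), under the isomorphism sending σᵢ to the transposition of i−1 and i. -/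
/-- The relations of the standard presentation of the symmetric group on `n` letters by
the elementary transpositions `σ₁, …, σ_{n-1}` (here indexed by `Fin (n-1)`):
braid relations, squares, and far commutations. -/
def symmetricGroupRels (n : ℕ) : Set (FreeGroup (Fin (n - 1))) :=
  {x | ∃ i j : Fin (n - 1), (j : ℕ) = (i : ℕ) + 1 ∧
    x = FreeGroup.of i * FreeGroup.of j * FreeGroup.of i *
      (FreeGroup.of j)⁻¹ * (FreeGroup.of i)⁻¹ * (FreeGroup.of j)⁻¹} ∪
  {x | ∃ i : Fin (n - 1), x = FreeGroup.of i * FreeGroup.of i} ∪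
  {x | ∃ i j : Fin (n - 1), ((i : ℕ) + 2 ≤ (j : ℕ) ∨ (j : ℕ) + 2 ≤ (i : ℕ)) ∧
    x = FreeGroup.of i * FreeGroup.of j * (FreeGroup.of i)⁻¹ * (FreeGroup.of j)⁻¹}

namespace SymPres

/-- helper : braid word trivial -/
lemma braid_word_eq_one {G : Type*} [Group G] {x y : G} (h : x * y * x = y * x * y) :
    x * y * x * y⁻¹ * x⁻¹ * y⁻¹ = 1 := by
  rw [h]; group

lemma comm_word_eq_one {G : Type*} [Group G] {x y : G} (h : x * y = y * x) :
    x * y * x⁻¹ * y⁻¹ = 1 := by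
  rw [h]; group

/-- The presented group with `N` generators. -/
abbrev SG (N : ℕ) : Type := PresentedGroup (symmetricGroupRels (N + 1))

/-- The generators, as a function on `ℕ` with junk value `1` out of range. -/
noncomputable def b {N : ℕ} (k : ℕ) : SG N :=
  if h : k < N then PresentedGroup.of (rels := symmetricGroupRels (N + 1)) (⟨k, h⟩ : Fin N)
  else 1

lemma rel_one {N : ℕ} {r : FreeGroup (Fin N)} (hr : r ∈ symmetricGroupRels (N + 1)) :
    PresentedGroup.mk (symmetricGroupRels (N + 1)) r = 1 := by
  have : PresentedGroup.mk (symmetricGroupRels (N + 1)) r =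
      QuotientGroup.mk' (Subgroup.normalClosure (symmetricGroupRels (N + 1))) r := rfl
  rw [PresentedGroup.mk_eq_one_iff]
  exact Subgroup.subset_normalClosure hr

lemma of_eq_b {N : ℕ} (i : Fin N) :
    PresentedGroup.of (rels := symmetricGroupRels (N + 1)) i = b (N := N) (i : ℕ) := by
  simp [b, i.isLt, Fin.eta]

lemma b_mul_self {N : ℕ} (k : ℕ) : b (N := N) k * b k = 1 := by
  unfold b
  split
  · next h =>
    have := rel_one (N := N) (r := FreeGroup.of (⟨k, h⟩ : Fin N) * FreeGroup.of (⟨k, h⟩ : Fin N))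
      (Or.inl (Or.inr ⟨⟨k, h⟩, rfl⟩))
    simpa [map_mul, PresentedGroup.of] using this
  · simp

lemma b_inv {N : ℕ} (k : ℕ) : (b (N := N) k)⁻¹ = b k :=
  inv_eq_of_mul_eq_one_right (b_mul_self k)

lemma b_braid {N : ℕ} {k : ℕ} (h : k + 1 < N) :
    b (N := N) k * b (k + 1) * b k = b (k + 1) * b k * b (k + 1) := by
  have hk : k < N := by omega
  have := rel_one (N := N)
    (r := FreeGroup.of (⟨k, hk⟩ : Fin N) * FreeGroup.of (⟨k + 1, h⟩ : Fin N) *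
      FreeGroup.of (⟨k, hk⟩ : Fin N) * (FreeGroup.of (⟨k + 1, h⟩ : Fin N))⁻¹ *
      (FreeGroup.of (⟨k, hk⟩ : Fin N))⁻¹ * (FreeGroup.of (⟨k + 1, h⟩ : Fin N))⁻¹)
    (Or.inl (Or.inl ⟨⟨k, hk⟩, ⟨k + 1, h⟩, rfl, rfl⟩))
  simp only [map_mul, map_inv] at this
  have hb : ∀ {x y : SG N}, x * y * x * y⁻¹ * x⁻¹ * y⁻¹ = 1 → x * y * x = y * x * y := by
    intro x y hxy
    have : x * y * x = ((x * y * x * y⁻¹ * x⁻¹ * y⁻¹) * y) * x * y := by group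
    rw [this, hxy]; group
  have := hb this
  simpa [b, hk, h, PresentedGroup.of] using this

lemma b_comm {N : ℕ} {k l : ℕ} (h : k + 2 ≤ l) :
    b (N := N) k * b l = b l * b k := by
  by_cases hl : l < N
  · have hk : k < N := by omega
    have := rel_one (N := N)
      (r := FreeGroup.of (⟨k, hk⟩ : Fin N) * FreeGroup.of (⟨l, hl⟩ : Fin N) *
        (FreeGroup.of (⟨k, hk⟩ : Fin N))⁻¹ * (FreeGroup.of (⟨l, hl⟩ : Fin N))⁻¹)
      (Or.inr ⟨⟨k, hk⟩, ⟨l, hl⟩, Or.inl h, rfl⟩)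
    simp only [map_mul, map_inv] at this
    have hc : ∀ {x y : SG N}, x * y * x⁻¹ * y⁻¹ = 1 → x * y = y * x := by
      intro x y hxy
      have : x * y = ((x * y * x⁻¹ * y⁻¹) * y) * x := by group
      rw [this, hxy]; group
    have := hc this
    simpa [b, hk, hl, PresentedGroup.of] using this
  · simp [b, hl]


/-- Embedding of the smaller presented group into the bigger one. -/
noncomputable def psi (m : ℕ) : SG m →* SG (m + 1) :=
  PresentedGroup.toGroup (f := fun i : Fin m => b (N := m + 1) (i : ℕ)) (by
    rintro r ((⟨i, j, hij, rfl⟩ | ⟨i, rfl⟩) | ⟨i, j, hij, rfl⟩)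
    · simp only [map_mul, map_inv, FreeGroup.lift_apply_of]
      apply braid_word_eq_one
      have : (j : ℕ) = (i : ℕ) + 1 := hij
      rw [this]
      exact b_braid (by have := i.isLt; omega)
    · simp only [map_mul, FreeGroup.lift_apply_of]
      exact b_mul_self _
    · simp only [map_mul, map_inv, FreeGroup.lift_apply_of]
      apply comm_word_eq_one
      rcases hij with h | h
      · exact b_comm h
      · exact (b_comm h).symm)

lemma psi_b {m : ℕ} {k : ℕ} (hk : k < m) : psi m (b k) = b k := by
  have hbk : b (N := m) k
      = PresentedGroup.of (rels := symmetricGroupRels (m + 1)) (⟨k, hk⟩ : Fin m) := by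
    simp [b, hk]
  rw [hbk]
  unfold psi
  rw [PresentedGroup.toGroup.of]

/-- Descending products `u j = b (N-1) * b (N-2) * ⋯ * b j` (and `1` for `j ≥ N`). -/
noncomputable def u (N : ℕ) (j : ℕ) : SG N :=
  ((List.range (N - j)).map (fun t => b (N - 1 - t))).prod

lemma u_of_le {N j : ℕ} (h : N ≤ j) : u N j = 1 := by
  simp [u, Nat.sub_eq_zero_of_le h]

lemma u_succ_mul {N j : ℕ} (h : j < N) : u N j = u N (j + 1) * b j := by
  have h1 : N - j = (N - (j + 1)) + 1 := by omega
  have h2 : N - 1 - (N - (j + 1)) = j := by omega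
  rw [u, h1, List.range_succ, List.map_append, List.prod_append]
  simp [u, h2]

lemma u_comm {N : ℕ} {k : ℕ} : ∀ j, k + 2 ≤ j → u N j * b k = b k * u N j := by
  intro j
  induction' hd : N - j with d ih generalizing j
  · intro _
    rw [u_of_le (by omega)]
    simp
  · intro hkj
    have hj : j < N := by omega
    rw [u_succ_mul hj, mul_assoc, ← b_comm hkj, ← mul_assoc, ih (j + 1) (by omega) (by omega),
      mul_assoc]

lemma u_pull {N : ℕ} {k : ℕ} (hkN : k + 1 ≤ N) :
    ∀ j, j + 1 ≤ k → u N j * b k = b (k - 1) * u N j := by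
  intro j hjk
  induction' hd : k - j - 1 with d ih generalizing j
  · -- k = j + 1
    have hk : k = j + 1 := by omega
    subst hk
    have h1 : j + 1 < N := hkN
    have hj : j < N := by omega
    have hb := b_braid (N := N) h1
    simp only [Nat.add_sub_cancel]
    calc u N j * b (j + 1)
        = u N (j + 2) * (b (j + 1) * b j * b (j + 1)) := by
          rw [u_succ_mul hj, u_succ_mul h1]; group
      _ = u N (j + 2) * b j * (b (j + 1) * b j) := by rw [← hb]; group
      _ = b j * u N (j + 2) * (b (j + 1) * b j) := by rw [u_comm (j + 2) (by omega)]
      _ = b j * u N j := by rw [u_succ_mul hj, u_succ_mul h1]; group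
  · have hj : j < N := by omega
    rw [u_succ_mul hj, mul_assoc, b_comm (by omega : j + 2 ≤ k), ← mul_assoc,
      ih (j + 1) (by omega) (by omega), mul_assoc]


/-- Key step: multiplying a coset representative by a generator lands in `(range psi) * rep`. -/
lemma step {m : ℕ} {j k : ℕ} (hj : j ≤ m + 1) (hk : k ≤ m) :
    ∃ y : SG m, ∃ j' ≤ m + 1, u (m + 1) j * b k = psi m y * u (m + 1) j' := by
  rcases lt_trichotomy (k + 1) j with h | h | h
  · -- k + 2 ≤ j : b k commutes with u, and b k ∈ range psi
    refine ⟨b k, j, hj, ?_⟩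
    rw [u_comm j (by omega), psi_b (by omega)]
  · -- k + 1 = j : u j * b (j-1) = u (j-1)
    refine ⟨1, k, by omega, ?_⟩
    rw [map_one, one_mul, u_succ_mul (show k < m + 1 by omega), ← h]
  · rcases Nat.lt_or_ge j (k + 1) with h2 | h2
    · rcases Nat.eq_or_lt_of_le (show j ≤ k by omega) with rfl | hjk
      · -- k = j
        refine ⟨1, j + 1, by omega, ?_⟩
        rw [map_one, one_mul, u_succ_mul (show j < m + 1 by omega), mul_assoc, b_mul_self,
          mul_one]
      · -- j < k : pull out b (k-1)
        refine ⟨b (k - 1), j, hj, ?_⟩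
        rw [u_pull (by omega) j (by omega), psi_b (by omega)]
    · omega

/-- Every element of `SG N` is a product of generators with indices `< N`. -/
lemma exists_list {N : ℕ} (x : SG N) :
    ∃ l : List ℕ, (∀ k ∈ l, k < N) ∧ x = (l.map (b (N := N))).prod := by
  induction x using PresentedGroup.induction_on with
  | H z =>
    induction z using FreeGroup.induction_on with
    | C1 => exact ⟨[], by simp, by simp [map_one]⟩
    | of i => exact ⟨[(i : ℕ)], by simpa using i.isLt, by simp; exact of_eq_b i⟩
    | inv_of i ih =>
      rcases ih with ⟨l, hl, hx⟩
      refine ⟨l.reverse, fun k hk => hl k (List.mem_reverse.mp hk), ?_⟩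
      rw [map_inv, hx]
      clear hx
      induction l with
      | nil => simp
      | cons a t iht =>
        simp only [List.map_cons, List.prod_cons, mul_inv_rev, List.reverse_cons,
          List.map_append, List.prod_append, List.map_cons, List.prod_cons, List.prod_nil]
        rw [iht (fun k hk => hl k (List.mem_cons_of_mem _ hk)), b_inv]
        simp
    | mul z w ihz ihw =>
      rcases ihz with ⟨l1, hl1, hx1⟩
      rcases ihw with ⟨l2, hl2, hx2⟩
      refine ⟨l1 ++ l2, ?_, ?_⟩
      · intro k hk
        rcases List.mem_append.mp hk with h | h
        · exact hl1 k h
        · exact hl2 k h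
      · rw [map_mul, hx1, hx2, List.map_append, List.prod_append]

/-- Coset cover: every element of `SG (m+1)` is `psi y * u j` with `j ≤ m + 1`. -/
lemma cover {m : ℕ} (x : SG (m + 1)) :
    ∃ y : SG m, ∃ j ≤ m + 1, x = psi m y * u (m + 1) j := by
  rcases exists_list x with ⟨l, hl, rfl⟩
  revert hl
  induction l using List.reverseRecOn with
  | nil => exact fun _ => ⟨1, m + 1, le_refl _, by simp [u_of_le (le_refl (m + 1))]⟩
  | append_singleton t k ih =>
    intro hl
    have hl' : ∀ k' ∈ t, k' < m + 1 := fun k' hk' => hl k' (List.mem_append_left _ hk')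
    rcases ih hl' with ⟨y, j, hj, hx⟩
    have hk : k ≤ m := by
      have := hl k (List.mem_append_right _ (List.mem_singleton_self k)); omega
    rcases step hj hk with ⟨y', j', hj', hstep⟩
    refine ⟨y * y', j', hj', ?_⟩
    rw [List.map_append, List.prod_append, hx]
    simp only [List.map_cons, List.prod_cons, List.map_nil, List.prod_nil, mul_one]
    rw [mul_assoc, hstep, map_mul]
    group

/-- Finiteness and cardinality bound by induction. -/
lemma finite_card : ∀ m : ℕ, Finite (SG m) ∧ Nat.card (SG m) ≤ (m + 1).factorial := by
  intro m
  induction m with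
  | zero =>
    have hsub : ∀ x : SG 0, x = 1 := by
      intro x
      rcases exists_list x with ⟨l, hl, rfl⟩
      have : l = [] := by
        cases l with
        | nil => rfl
        | cons a t => exact absurd (hl a (List.mem_cons_self)) (by omega)
      simp [this]
    have : Subsingleton (SG 0) := ⟨fun a c => by rw [hsub a, hsub c]⟩
    refine ⟨Finite.of_subsingleton, ?_⟩
    have h1 : Nat.card (SG 0) = 1 := Nat.card_eq_one_iff_unique.mpr ⟨this, ⟨1⟩⟩
    simp [h1, Nat.factorial]
  | succ m ih =>
    obtain ⟨hfin, hcard⟩ := ih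
    set F : SG m × Fin (m + 2) → SG (m + 1) := fun p => psi m p.1 * u (m + 1) (p.2 : ℕ) with hF
    have hsurj : Function.Surjective F := by
      intro x
      rcases cover x with ⟨y, j, hj, hx⟩
      exact ⟨(y, ⟨j, by omega⟩), hx.symm⟩
    have hfin' : Finite (SG (m + 1)) := Finite.of_surjective F hsurj
    refine ⟨hfin', ?_⟩
    calc Nat.card (SG (m + 1)) ≤ Nat.card (SG m × Fin (m + 2)) :=
          Nat.card_le_card_of_surjective F hsurj
      _ = Nat.card (SG m) * (m + 2) := by simp [Nat.card_prod]
      _ ≤ (m + 1).factorial * (m + 2) := Nat.mul_le_mul_right _ hcard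
      _ = (m + 2).factorial := by rw [Nat.factorial_succ (m + 1)]; ring


lemma swap_braid {α : Type*} [DecidableEq α] {p q r : α} (hpq : p ≠ q) (hqr : q ≠ r)
    (hpr : p ≠ r) :
    Equiv.swap p q * Equiv.swap q r * Equiv.swap p q
      = Equiv.swap q r * Equiv.swap p q * Equiv.swap q r := by
  have h1 := Equiv.swap_mul_swap_mul_swap hpq hpr
  have h2 := Equiv.swap_mul_swap_mul_swap hqr.symm (Ne.symm hpr)
  rw [Equiv.swap_comm q p, Equiv.swap_comm r q] at h2
  rw [h1, h2, Equiv.swap_comm]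

lemma swap_comm_of_ne {α : Type*} [DecidableEq α] {p q r s : α} (h1 : p ≠ r) (h2 : p ≠ s)
    (h3 : q ≠ r) (h4 : q ≠ s) :
    Equiv.swap p q * Equiv.swap r s = Equiv.swap r s * Equiv.swap p q := by
  have hdis : (Equiv.swap p q).Disjoint (Equiv.swap r s) := by
    intro x
    by_cases hx : x = p ∨ x = q
    · right
      rcases hx with rfl | rfl
      · exact Equiv.swap_apply_of_ne_of_ne h1 h2
      · exact Equiv.swap_apply_of_ne_of_ne h3 h4
    · left
      push_neg at hx
      exact Equiv.swap_apply_of_ne_of_ne hx.1 hx.2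
  exact hdis.commute.eq

end SymPres


open SymPres

/-- For every `n ≥ 1`, the group presented by generators `σ₁, …, σ_{n-1}` subject to the
braid relations, `σᵢ² = 1` and the far commutations is isomorphic to the symmetric group
on `n` elements, via an isomorphism sending each generator to the corresponding
elementary transposition. -/
theorem presentedGroup_symmetricGroup_iso (n : ℕ) (hn : 1 ≤ n) :
    ∃ e : PresentedGroup (symmetricGroupRels n) ≃* Equiv.Perm (Fin n),
      ∀ i : Fin (n - 1),
        e (PresentedGroup.of i) =
          Equiv.swap (⟨(i : ℕ), by have := i.isLt; omega⟩ : Fin n)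
            (⟨(i : ℕ) + 1, by have := i.isLt; omega⟩ : Fin n) := by
  obtain ⟨m, rfl⟩ : ∃ m, n = m + 1 := ⟨n - 1, by omega⟩
  set f : Fin m → Equiv.Perm (Fin (m + 1)) := fun i =>
    Equiv.swap (⟨(i : ℕ), by omega⟩ : Fin (m + 1)) (⟨(i : ℕ) + 1, by omega⟩ : Fin (m + 1))
    with hf
  have hrels : ∀ r ∈ symmetricGroupRels (m + 1), FreeGroup.lift f r = 1 := by
    rintro r ((⟨i, j, hij, rfl⟩ | ⟨i, rfl⟩) | ⟨i, j, hij, rfl⟩)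
    · simp only [map_mul, map_inv, FreeGroup.lift_apply_of]
      apply braid_word_eq_one
      have hji : (j : ℕ) = (i : ℕ) + 1 := hij
      have hfj : f j = Equiv.swap (⟨(i : ℕ) + 1, by omega⟩ : Fin (m + 1))
          (⟨(i : ℕ) + 2, by have := j.isLt; omega⟩ : Fin (m + 1)) := by
        simp [hf, Fin.ext_iff, hji]
      rw [hfj, hf]
      exact swap_braid (by simp [Fin.ext_iff]) (by simp [Fin.ext_iff])
        (by simp [Fin.ext_iff])
    · simp only [map_mul, FreeGroup.lift_apply_of]
      exact Equiv.swap_mul_self _ _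
    · simp only [map_mul, map_inv, FreeGroup.lift_apply_of]
      apply comm_word_eq_one
      simp only [hf]
      apply swap_comm_of_ne <;> simp [Fin.ext_iff] <;> omega
  set φ : PresentedGroup (symmetricGroupRels (m + 1)) →* Equiv.Perm (Fin (m + 1)) :=
    PresentedGroup.toGroup hrels with hφ
  have hsurj : Function.Surjective φ := by
    intro x
    have hx : x ∈ Submonoid.closure
        (Set.range fun i : Fin m ↦ Equiv.swap i.castSucc i.succ) := by
      rw [Equiv.Perm.mclosure_swap_castSucc_succ]; trivial
    have hx' : x ∈ Set.range φ := by
      refine Submonoid.closure_induction (fun y hy => ?_) ⟨1, map_one φ⟩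
        (fun y z _ _ hy hz => ?_) hx
      · obtain ⟨i, rfl⟩ := hy
        refine ⟨PresentedGroup.of i, ?_⟩
        rw [hφ, PresentedGroup.toGroup.of]
        congr 1 <;> exact Fin.ext rfl
      · obtain ⟨a, ha⟩ := hy
        obtain ⟨c, hc⟩ := hz
        exact ⟨a * c, by rw [map_mul, ha, hc]⟩
    exact hx'
  obtain ⟨hfin, hcard⟩ := finite_card m
  haveI := hfin
  haveI : Fintype (SG m) := Fintype.ofFinite _
  have hc1 : Nat.card (Equiv.Perm (Fin (m + 1))) = (m + 1).factorial := by
    simp [Nat.card_eq_fintype_card, Fintype.card_perm]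
  have hc2 : Nat.card (Equiv.Perm (Fin (m + 1))) ≤ Nat.card (SG m) :=
    Nat.card_le_card_of_surjective φ hsurj
  have hbij : Function.Bijective φ :=
    (Fintype.bijective_iff_surjective_and_card φ).mpr
      ⟨hsurj, by rw [← Nat.card_eq_fintype_card, ← Nat.card_eq_fintype_card]; unfold SG at hcard hc2; omega⟩
  refine ⟨MulEquiv.ofBijective φ hbij, fun i => ?_⟩
  show φ (PresentedGroup.of i) = _
  rw [hφ, PresentedGroup.toGroup.of]
end

section
/- The string rewriting system with rules ba ⇒ ab and bb ⇒ 1 is confluent: writing Rw* for the reflexive-transitive closure of the one-step rewriting relation Rw, whenever Rw* u v₁ and Rw* u v₂ hold, there exists a word w with Rw* v₁ w and Rw* v₂ w. -/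
/-- One-step rewriting relation of the string rewriting system with rules
`ba ⇒ ab` and `bb ⇒ 1`, on words over the alphabet `{a, b}` encoded as `List Bool`
with `a = false` and `b = true`. -/
def Rw (u v : List Bool) : Prop :=
  ∃ w₁ w₂ : List Bool,
    (u = w₁ ++ [true, false] ++ w₂ ∧ v = w₁ ++ [false, true] ++ w₂) ∨
    (u = w₁ ++ [true, true] ++ w₂ ∧ v = w₁ ++ w₂)

def nf (u : List Bool) : List Bool :=
  List.replicate (u.count false) false ++ List.replicate (u.count true % 2) true

lemma Rw.append_left {u v : List Bool} (c : List Bool) (h : Rw u v) : Rw (c ++ u) (c ++ v) := by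
  obtain ⟨w₁, w₂, h | h⟩ := h
  · exact ⟨c ++ w₁, w₂, Or.inl ⟨by simp [h.1], by simp [h.2]⟩⟩
  · exact ⟨c ++ w₁, w₂, Or.inr ⟨by simp [h.1], by simp [h.2]⟩⟩

lemma rtg_append_left {u v : List Bool} (c : List Bool)
    (h : Relation.ReflTransGen Rw u v) : Relation.ReflTransGen Rw (c ++ u) (c ++ v) :=
  Relation.ReflTransGen.lift (c ++ ·) (fun _ _ => Rw.append_left c) u v h

lemma move_true : ∀ (m : ℕ) (s : List Bool), Relation.ReflTransGen Rw
    (true :: (List.replicate m false ++ s)) (List.replicate m false ++ true :: s) := by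
  intro m
  induction m with
  | zero => intro s; simp; exact Relation.ReflTransGen.refl
  | succ n ih =>
    intro s
    refine Relation.ReflTransGen.head
      (b := false :: (true :: (List.replicate n false ++ s)))
      ⟨[], List.replicate n false ++ s, Or.inl ⟨by simp [List.replicate_succ], by simp⟩⟩ ?_
    have := rtg_append_left [false] (ih s)
    simpa [List.replicate_succ] using this

lemma to_nf : ∀ u : List Bool, Relation.ReflTransGen Rw u (nf u) := by
  intro u
  induction u with
  | nil => simp only [nf]; simp; exact Relation.ReflTransGen.refl
  | cons x t ih =>
    cases x with
    | false =>
      have h := rtg_append_left [false] ih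
      have : nf (false :: t) = false :: nf t := by
        simp [nf, List.replicate_succ, List.count_cons]
      rw [this]
      simpa using h
    | true =>
      have h1 : Relation.ReflTransGen Rw (true :: t) (true :: nf t) := by
        simpa using rtg_append_left [true] ih
      refine h1.trans ?_
      unfold nf
      have hcf : (true :: t).count false = t.count false := by simp [List.count_cons]
      have hct : (true :: t).count true = t.count true + 1 := by simp [List.count_cons]
      rw [hcf, hct]
      set m := t.count false with hm
      have he : t.count true % 2 = 0 ∨ t.count true % 2 = 1 := Nat.mod_two_eq_zero_or_one _
      rcases he with he | he
      · rw [he]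
        have : (t.count true + 1) % 2 = 1 := by omega
        rw [this]
        simpa using move_true m (List.replicate 0 true)
      · rw [he]
        have : (t.count true + 1) % 2 = 0 := by omega
        rw [this]
        have step1 := move_true m (List.replicate 1 true)
        refine step1.trans ?_
        refine Relation.ReflTransGen.single ?_
        exact ⟨List.replicate m false, [], Or.inr ⟨by simp, by simp⟩⟩

lemma nf_eq_of_rw {u v : List Bool} (h : Rw u v) : nf u = nf v := by
  have h1 : u.count false = v.count false ∧ u.count true % 2 = v.count true % 2 := by
    obtain ⟨w₁, w₂, h | h⟩ := h <;> obtain ⟨hu, hv⟩ := h <;> subst hu <;> subst hv <;>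
      constructor <;> simp [List.count_append] <;> omega
  rw [nf, nf, h1.1, h1.2]

lemma nf_eq_of_rtg {u v : List Bool} (h : Relation.ReflTransGen Rw u v) : nf u = nf v := by
  induction h with
  | refl => rfl
  | tail _ hstep ih => exact ih.trans (nf_eq_of_rw hstep)

/-- The string rewriting system with rules `ba ⇒ ab` and `bb ⇒ 1` is confluent. -/
theorem rw_confluent :
    ∀ u v₁ v₂ : List Bool, Relation.ReflTransGen Rw u v₁ → Relation.ReflTransGen Rw u v₂ →
      ∃ w : List Bool, Relation.ReflTransGen Rw v₁ w ∧ Relation.ReflTransGen Rw v₂ w := by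
  intro u v₁ v₂ h1 h2
  refine ⟨nf u, ?_, ?_⟩
  · rw [nf_eq_of_rtg h1]; exact to_nf v₁
  · rw [nf_eq_of_rtg h2]; exact to_nf v₂
end
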